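/- If G is a graph with dual mutual-visibility number μ_d(G)=1 and {x} is a maximum dual mutual-visibility set in G, then the total mutual-visibility number of G−x equals 0. -/

import Mathlib

open SimpleGraph

/-- `u` and `v` are `X`-visible in `G`: there is a shortest `u,v`-walk whose
vertices meet `X` only possibly in `u` and `v`. -/
def IsMVisible {V : Type*} (G : SimpleGraph V) (X : Set V) (u v : V) : Prop :=
  ∃ P : G.Walk u v, P.length = G.dist u v ∧
    ∀ w ∈ P.support, w ∈ X → w = u ∨ w = v

/-- mutual-visibility set -/
def IsMVSet {V : Type*} (G : SimpleGraph V) (X : Set V) : Prop :=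
  ∀ u ∈ X, ∀ v ∈ X, IsMVisible G X u v

/-- outer mutual-visibility set -/
def IsOuterMVSet {V : Type*} (G : SimpleGraph V) (X : Set V) : Prop :=
  ∀ u ∈ X, ∀ v : V, IsMVisible G X u v

/-- dual mutual-visibility set -/
def IsDualMVSet {V : Type*} (G : SimpleGraph V) (X : Set V) : Prop :=
  (∀ u ∈ X, ∀ v ∈ X, IsMVisible G X u v) ∧
  (∀ u ∉ X, ∀ v ∉ X, IsMVisible G X u v)

/-- total mutual-visibility set -/
def IsTotalMVSet {V : Type*} (G : SimpleGraph V) (X : Set V) : Prop :=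
  ∀ u v : V, IsMVisible G X u v

/-- the mutual-visibility number μ(G) -/
noncomputable def mu {V : Type*} (G : SimpleGraph V) : ℕ :=
  sSup {n | ∃ X : Set V, IsMVSet G X ∧ X.ncard = n}

/-- the outer mutual-visibility number μₒ(G) -/
noncomputable def muO {V : Type*} (G : SimpleGraph V) : ℕ :=
  sSup {n | ∃ X : Set V, IsOuterMVSet G X ∧ X.ncard = n}

/-- the dual mutual-visibility number μ_d(G) -/
noncomputable def muD {V : Type*} (G : SimpleGraph V) : ℕ :=
  sSup {n | ∃ X : Set V, IsDualMVSet G X ∧ X.ncard = n}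

/-- the total mutual-visibility number μ_t(G) -/
noncomputable def muT {V : Type*} (G : SimpleGraph V) : ℕ :=
  sSup {n | ∃ X : Set V, IsTotalMVSet G X ∧ X.ncard = n}

/-- Lift a walk whose support lies in `s` to the induced subgraph. -/
lemma lift_walk {V : Type*} {G : SimpleGraph V} {s : Set V} :
    ∀ {a b : V} (p : G.Walk a b), (∀ w ∈ p.support, w ∈ s) →
      ∀ (ha : a ∈ s) (hb : b ∈ s),
      ∃ q : (G.induce s).Walk ⟨a, ha⟩ ⟨b, hb⟩, q.length = p.length := by
  intro a b p
  induction p with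
  | nil => intro _ ha _; exact ⟨Walk.nil, rfl⟩
  | @cons a c b h p ih =>
    intro hs ha hb
    have hc : c ∈ s := hs c (by simp)
    obtain ⟨q, hq⟩ := ih (fun w hw => hs w (by simp [hw])) hc hb
    exact ⟨Walk.cons (by simpa using h) q, by simp [hq]⟩

theorem stmt_0 {V : Type*} [Fintype V] (G : SimpleGraph V) (hG : G.Connected) (x : V)
    (hconn : (G.induce {v | v ≠ x}).Connected)
    (hmuD : muD G = 1) (hx : IsDualMVSet G {x}) :
    muT (G.induce {v | v ≠ x}) = 0 := by
  set s : Set V := {v | v ≠ x} with hs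
  -- every total mutual-visibility set of the induced graph is empty
  have key : ∀ X : Set s, IsTotalMVSet (G.induce s) X → X = ∅ := by
    intro X hX
    by_contra hne
    obtain ⟨y, hy⟩ := Set.nonempty_iff_ne_empty.mpr hne
    -- build a dual mv-set of size 2 in G
    set S : Set V := {x, (y : V)} with hS
    have hyx : (y : V) ≠ x := y.prop
    have hSdual : IsDualMVSet G S := by
      constructor
      · intro u hu v hv
        by_cases huv : u = v
        · subst huv
          exact ⟨Walk.nil, by simp [SimpleGraph.dist_self], fun w hw _ => Or.inl (by simpa using hw)⟩
        · obtain ⟨p, hp⟩ := ((hG.preconnected u v)).exists_walk_length_eq_dist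
          refine ⟨p, hp, fun w _ hwS => ?_⟩
          rcases hu with hu | hu <;> rcases hv with hv | hv <;>
            rcases hwS with hw | hw <;> simp_all
      · intro u hu v hv
        simp only [hS, Set.mem_insert_iff, Set.mem_singleton_iff, not_or] at hu hv
        obtain ⟨P, hPlen, hPvis⟩ := hx.2 u (by simpa using hu.1) v (by simpa using hv.1)
        have hxsup : ∀ w ∈ P.support, w ∈ s := by
          intro w hw
          simp only [hs, Set.mem_setOf_eq]
          intro hwx
          subst hwx
          rcases hPvis w hw rfl with h | h
          · exact hu.1 h.symm
          · exact hv.1 h.symm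
        obtain ⟨P', hP'len⟩ := lift_walk P hxsup (by simp [hs, hu.1]) (by simp [hs, hv.1])
        have hd : (G.induce s).dist ⟨u, by simp [hs, hu.1]⟩ ⟨v, by simp [hs, hv.1]⟩ ≤
            G.dist u v := by
          calc (G.induce s).dist _ _ ≤ P'.length := SimpleGraph.dist_le P'
            _ = P.length := hP'len
            _ = G.dist u v := hPlen
        obtain ⟨Q, hQlen, hQvis⟩ := hX ⟨u, by simp [hs, hu.1]⟩ ⟨v, by simp [hs, hv.1]⟩
        set Qm : G.Walk u v := Q.map (SimpleGraph.Embedding.induce s).toHom with hQm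
        have hQmlen : Qm.length = G.dist u v := by
          have h1 : Qm.length = Q.length := Walk.length_map _ _
          have h2 : G.dist u v ≤ Qm.length := SimpleGraph.dist_le Qm
          omega
        refine ⟨Qm, hQmlen, fun w hw hwS => ?_⟩
        exfalso
        replace hw : w ∈ Q.support.map (SimpleGraph.Embedding.induce (G := G) s).toHom := by
          rw [← Walk.support_map]; exact hw
        rw [List.mem_map] at hw
        obtain ⟨z, hz, hzw⟩ := hw
        rcases hwS with hwx | hwy
        · exact z.prop (hzw.trans hwx)
        · have hzy : z = y := Subtype.ext (hzw.trans hwy)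
          subst hzy
          rcases hQvis z hz hy with h | h
          · exact hu.2 (congrArg Subtype.val h).symm
          · exact hv.2 (congrArg Subtype.val h).symm
    -- so muD G ≥ 2, contradiction
    have h2 : (2 : ℕ) ∈ {n | ∃ X : Set V, IsDualMVSet G X ∧ X.ncard = n} :=
      ⟨S, hSdual, Set.ncard_pair (Ne.symm hyx)⟩
    have hbdd : BddAbove {n | ∃ X : Set V, IsDualMVSet G X ∧ X.ncard = n} := by
      refine ⟨Fintype.card V, fun n hn => ?_⟩
      obtain ⟨X, _, hXn⟩ := hn
      calc n = X.ncard := hXn.symm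
        _ ≤ (Set.univ : Set V).ncard := Set.ncard_le_ncard (Set.subset_univ X) Set.finite_univ
        _ = Fintype.card V := by rw [Set.ncard_univ, Nat.card_eq_fintype_card]
    have : 2 ≤ muD G := le_csSup hbdd h2
    omega
  -- hence the sup defining muT is over the singleton {0}
  have hset : {n | ∃ X : Set s, IsTotalMVSet (G.induce s) X ∧ X.ncard = n} = {0} := by
    ext n
    simp only [Set.mem_setOf_eq, Set.mem_singleton_iff]
    constructor
    · rintro ⟨X, hX, rfl⟩
      rw [key X hX]; simp
    · rintro rfl
      refine ⟨∅, fun u v => ?_, by simp⟩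
      obtain ⟨p, hp⟩ := (hconn.preconnected u v).exists_walk_length_eq_dist
      exact ⟨p, hp, fun w _ hw => absurd hw (Set.notMem_empty w)⟩
  rw [muT, hset, csSup_singleton]
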